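/- Let J be the h×1 random indicator vector with entries J_y = 1{Y = y}, let f ∈ ℝ^h have entries f_y, let D_f and D_g be the diagonal matrices with diagonal entries f_y and g_y := √f_y, and let ε := J − f − D_g μᵀ Z. Then E[ε εᵀ] = (D_f − f fᵀ) − D_g μᵀ μ D_g, and consequently E[D_g^{-1} ε εᵀ D_g^{-1}] = Q_g − μᵀ μ, where Q_g = I_h − g gᵀ and g ∈ ℝ^h has entries g_y. -/

import Mathlib

open MeasureTheory Matrix

private lemma aux_int_mul {Ω : Type*} [MeasurableSpace Ω] {μ : Measure Ω}
    {f g : Ω → ℝ} (hf : MeasureTheory.MemLp f 2 μ) (hg : MeasureTheory.MemLp g 2 μ) :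
    MeasureTheory.Integrable (fun ω => f ω * g ω) μ := by
  have h : MeasureTheory.MemLp (f • g) 1 μ :=
    hg.smul hf (hpqr := ⟨by
      rw [inv_one, ENNReal.inv_two_add_inv_two]⟩)
  rw [memLp_one_iff_integrable] at h
  exact h

/-- Let `Y : Ω → {1,…,h}` with `f_y := ℙ(Y = y) > 0`, and `Z : Ω → ℝ^p`
square-integrable with `E[Z] = 0` and `E[Z Zᵀ] = I_p`.  Let `μmat` be the p×h matrix with
y-th column `g_y E[Z | Y = y]`, `g_y = √f_y`.  With `J_y = 1{Y = y}` and
`ε := J - f - D_g μmatᵀ Z`, one has `E[ε εᵀ] = (D_f - f fᵀ) - D_g μmatᵀ μmat D_g`, and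
consequently `E[D_g⁻¹ ε εᵀ D_g⁻¹] = Q_g - μmatᵀ μmat` where `Q_g = I_h - g gᵀ`. -/
theorem stmt_11 {p h : ℕ} {Ω : Type*} [MeasurableSpace Ω]
    (μ : Measure Ω) [IsProbabilityMeasure μ]
    (Y : Ω → Fin h) (hY : Measurable Y)
    (Z : Ω → Fin p → ℝ) (hZ : ∀ i, MemLp (fun ω => Z ω i) 2 μ)
    (f : Fin h → ℝ) (hf : ∀ y, f y = (μ {ω | Y ω = y}).toReal)
    (hfpos : ∀ y, 0 < f y)
    (g : Fin h → ℝ) (hg : ∀ y, g y = Real.sqrt (f y))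
    (hEZ : ∀ i, ∫ ω, Z ω i ∂μ = 0)
    (hZZ : ∀ i j, ∫ ω, Z ω i * Z ω j ∂μ = if i = j then (1 : ℝ) else 0)
    (μmat : Matrix (Fin p) (Fin h) ℝ)
    (hμmat : ∀ i y, μmat i y
      = g y * ((f y)⁻¹ * ∫ ω, Z ω i * (if Y ω = y then (1 : ℝ) else 0) ∂μ))
    (ε : Ω → Fin h → ℝ)
    (hε : ∀ ω y, ε ω y = (if Y ω = y then (1 : ℝ) else 0) - f y
      - g y * ∑ i, μmat i y * Z ω i) :
    (∀ y t, ∫ ω, ε ω y * ε ω t ∂μ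
      = ((if y = t then f y else 0) - f y * f t)
        - g y * g t * ∑ i, μmat i y * μmat i t) ∧
    (∀ y t, ∫ ω, ((g y)⁻¹ * ε ω y) * ((g t)⁻¹ * ε ω t) ∂μ
      = (if y = t then (1 : ℝ) else 0) - g y * g t - ∑ i, μmat i y * μmat i t) := by
  have hgpos : ∀ y, 0 < g y := fun y => by rw [hg]; exact Real.sqrt_pos.2 (hfpos y)
  have hgg : ∀ y, g y * g y = f y := fun y => by
    rw [hg]; exact Real.mul_self_sqrt (hfpos y).le
  -- notation
  set J : Fin h → Ω → ℝ := fun y ω => if Y ω = y then 1 else 0 with hJdef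
  set S : Fin h → Ω → ℝ := fun y ω => ∑ i, μmat i y * Z ω i with hSdef
  have hmeasY : ∀ y, MeasurableSet {ω | Y ω = y} := fun y => hY (measurableSet_singleton y)
  have hJmem : ∀ y, MemLp (J y) 2 μ := by
    intro y
    refine MemLp.of_bound ?_ 1 ?_
    · exact (Measurable.ite (hmeasY y) measurable_const measurable_const).aestronglyMeasurable
    · filter_upwards with ω
      simp only [hJdef]
      split <;> norm_num
  have hSmem : ∀ y, MemLp (S y) 2 μ := by
    intro y
    exact memLp_finset_sum _ (fun i _ => (hZ i).const_mul (μmat i y))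
  have hεmem : ∀ y, MemLp (fun ω => ε ω y) 2 μ := by
    intro y
    have heq : (fun ω => ε ω y) = fun ω => J y ω - f y - g y * S y ω :=
      funext fun ω => hε ω y
    rw [heq]
    exact ((hJmem y).sub (memLp_const _)).sub ((hSmem y).const_mul _)
  -- basic integrals
  have hintJ : ∀ y, ∫ ω, J y ω ∂μ = f y := by
    intro y
    have heq : J y = Set.indicator {ω | Y ω = y} (fun _ => (1 : ℝ)) := by
      funext ω
      simp [hJdef, Set.indicator_apply, Set.mem_setOf_eq]
    rw [heq, integral_indicator_const _ (hmeasY y), hf y, smul_eq_mul, mul_one, measureReal_def]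
  have hintJZ : ∀ i y, ∫ ω, J y ω * Z ω i ∂μ = μmat i y * g y := by
    intro i y
    have hcomm : ∫ ω, J y ω * Z ω i ∂μ = ∫ ω, Z ω i * (if Y ω = y then (1:ℝ) else 0) ∂μ := by
      congr 1; funext ω; simp [hJdef, mul_comm]
    rw [hcomm]
    have h1 : μmat i y * g y
        = (g y * g y) * ((f y)⁻¹ * ∫ ω, Z ω i * (if Y ω = y then (1:ℝ) else 0) ∂μ) := by
      rw [hμmat i y]; ring
    rw [hgg y] at h1
    rw [h1, ← mul_assoc, mul_inv_cancel₀ (hfpos y).ne', one_mul]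
  have hintS : ∀ y, ∫ ω, S y ω ∂μ = 0 := by
    intro y
    rw [hSdef]
    rw [integral_finset_sum _ (fun i _ => ((hZ i).integrable one_le_two).const_mul (μmat i y))]
    simp [integral_const_mul, hEZ]
  -- generic product-with-S integral
  have hintMulS : ∀ (w : Ω → ℝ), MemLp w 2 μ → ∀ y,
      ∫ ω, w ω * S y ω ∂μ = ∑ i, μmat i y * ∫ ω, w ω * Z ω i ∂μ := by
    intro w hw y
    have heq : (fun ω => w ω * S y ω) = fun ω => ∑ i, μmat i y * (w ω * Z ω i) := by
      funext ω
      rw [hSdef, Finset.mul_sum]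
      exact Finset.sum_congr rfl (fun i _ => by ring)
    rw [heq, integral_finset_sum _ (fun i _ => (aux_int_mul hw (hZ i)).const_mul (μmat i y))]
    simp [integral_const_mul]
  -- key expansion lemma
  have key : ∀ (w : Ω → ℝ), MemLp w 2 μ → ∀ t,
      ∫ ω, w ω * ε ω t ∂μ
        = (∫ ω, w ω * J t ω ∂μ) - f t * (∫ ω, w ω ∂μ)
          - g t * ∑ i, μmat i t * ∫ ω, w ω * Z ω i ∂μ := by
    intro w hw t
    have heq : (fun ω => w ω * ε ω t)
        = fun ω => w ω * J t ω - f t * w ω - g t * (w ω * S t ω) := by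
      funext ω
      rw [hε ω t]
      show w ω * (J t ω - f t - g t * S t ω) = _
      ring
    have hI1 : Integrable (fun ω => w ω * J t ω) μ := aux_int_mul hw (hJmem t)
    have hI2 : Integrable (fun ω => f t * w ω) μ := (hw.integrable one_le_two).const_mul _
    have hI3 : Integrable (fun ω => g t * (w ω * S t ω)) μ :=
      (aux_int_mul hw (hSmem t)).const_mul _
    calc ∫ ω, w ω * ε ω t ∂μ
        = ∫ ω, (w ω * J t ω - f t * w ω - g t * (w ω * S t ω)) ∂μ := by rw [heq]
      _ = (∫ ω, (w ω * J t ω - f t * w ω) ∂μ) - ∫ ω, g t * (w ω * S t ω) ∂μ :=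
          integral_sub (hI1.sub hI2) hI3
      _ = ((∫ ω, w ω * J t ω ∂μ) - ∫ ω, f t * w ω ∂μ) - ∫ ω, g t * (w ω * S t ω) ∂μ := by
          rw [integral_sub hI1 hI2]
      _ = (∫ ω, w ω * J t ω ∂μ) - f t * (∫ ω, w ω ∂μ)
          - g t * ∑ i, μmat i t * ∫ ω, w ω * Z ω i ∂μ := by
          rw [integral_const_mul, integral_const_mul, hintMulS w hw t]
  -- integral of epsilon
  have hintε : ∀ y, ∫ ω, ε ω y ∂μ = 0 := by
    intro y
    have heq : (fun ω => ε ω y) = fun ω => J y ω - f y - g y * S y ω :=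
      funext fun ω => hε ω y
    have hI1 : Integrable (J y) μ := (hJmem y).integrable one_le_two
    have hI2 : Integrable (fun _ : Ω => f y) μ := integrable_const _
    have hI3 : Integrable (fun ω => g y * S y ω) μ :=
      ((hSmem y).integrable one_le_two).const_mul _
    calc ∫ ω, ε ω y ∂μ
        = ∫ ω, (J y ω - f y - g y * S y ω) ∂μ := by rw [heq]
      _ = (∫ ω, (J y ω - f y) ∂μ) - ∫ ω, g y * S y ω ∂μ :=
          integral_sub (hI1.sub hI2) hI3
      _ = ((∫ ω, J y ω ∂μ) - ∫ ω, (f y : ℝ) ∂μ) - ∫ ω, g y * S y ω ∂μ := by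
          rw [integral_sub hI1 hI2]
      _ = 0 := by
          rw [integral_const_mul, hintS, hintJ, integral_const]
          simp
  -- integral of J y * J t
  have hintJJ : ∀ y t, ∫ ω, J y ω * J t ω ∂μ = if y = t then f y else 0 := by
    intro y t
    rcases eq_or_ne y t with rfl | hne
    · have heq : (fun ω => J y ω * J y ω) = J y := by
        funext ω; simp only [hJdef]; split <;> norm_num
      rw [heq, hintJ]; simp
    · have heq : (fun ω => J y ω * J t ω) = fun _ => (0:ℝ) := by
        funext ω
        simp only [hJdef]
        by_cases h1 : Y ω = y
        · have h2 : Y ω ≠ t := fun h2 => hne (h1 ▸ h2 ▸ rfl)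
          simp [h1, h2, hne]
        · simp [h1]
      rw [heq]
      simp [hne]
  -- integral of Z i * epsilon y
  have hintZε : ∀ i y, ∫ ω, Z ω i * ε ω y ∂μ = 0 := by
    intro i y
    rw [key (fun ω => Z ω i) (hZ i) y]
    have h1 : ∫ ω, Z ω i * J y ω ∂μ = μmat i y * g y := by
      have hc : ∫ ω, Z ω i * J y ω ∂μ = ∫ ω, J y ω * Z ω i ∂μ := by
        congr 1; funext ω; ring
      rw [hc, hintJZ]
    have h2 : ∑ j, μmat j y * ∫ ω, Z ω i * Z ω j ∂μ = μmat i y := by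
      have : ∀ j, μmat j y * ∫ ω, Z ω i * Z ω j ∂μ
          = if i = j then μmat j y else 0 := by
        intro j; rw [hZZ i j]; split <;> simp
      rw [Finset.sum_congr rfl (fun j _ => this j)]
      simp
    rw [h1, h2, hEZ i]
    ring
  -- integral of J t * epsilon y
  have hintJε : ∀ t y, ∫ ω, J t ω * ε ω y ∂μ
      = (if y = t then f y else 0) - f y * f t - g y * g t * ∑ i, μmat i y * μmat i t := by
    intro t y
    rw [key (J t) (hJmem t) y, hintJJ t y, hintJ t]
    have h1 : ∑ i, μmat i y * ∫ ω, J t ω * Z ω i ∂μ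
        = g t * ∑ i, μmat i y * μmat i t := by
      rw [Finset.mul_sum]
      exact Finset.sum_congr rfl (fun i _ => by rw [hintJZ i t]; ring)
    rw [h1]
    have h2 : (if t = y then f t else 0) = (if y = t then f y else 0) := by
      rcases eq_or_ne y t with rfl | hne
      · simp
      · simp [hne, Ne.symm hne]
    rw [h2]
    ring
  -- first statement
  have main : ∀ y t, ∫ ω, ε ω y * ε ω t ∂μ
      = ((if y = t then f y else 0) - f y * f t)
        - g y * g t * ∑ i, μmat i y * μmat i t := by
    intro y t
    rw [key (fun ω => ε ω y) (hεmem y) t, hintε y]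
    have h1 : ∫ ω, ε ω y * J t ω ∂μ = ∫ ω, J t ω * ε ω y ∂μ := by
      congr 1; funext ω; ring
    have h2 : ∀ i, ∫ ω, ε ω y * Z ω i ∂μ = 0 := by
      intro i
      have : ∫ ω, ε ω y * Z ω i ∂μ = ∫ ω, Z ω i * ε ω y ∂μ := by
        congr 1; funext ω; ring
      rw [this, hintZε]
    rw [h1, hintJε t y]
    simp only [h2, mul_zero, Finset.sum_const_zero]
    ring
  refine ⟨main, ?_⟩
  intro y t
  have heq : (fun ω => ((g y)⁻¹ * ε ω y) * ((g t)⁻¹ * ε ω t))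
      = fun ω => ((g y)⁻¹ * (g t)⁻¹) * (ε ω y * ε ω t) := by
    funext ω; ring
  rw [heq, integral_const_mul, main y t]
  have hgy := (hgpos y).ne'
  have hgt := (hgpos t).ne'
  rcases eq_or_ne y t with rfl | hne
  · simp only [if_pos rfl, if_true]
    rw [← hgg y]
    field_simp
  · simp only [if_neg hne]
    rw [← hgg y, ← hgg t]
    field_simp
    ring
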